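/- Let (S(U), Δ) be a pure BV∞-algebra: Δ = Σ_{n≥1} ħ^{n−1} Δ_n with each Δ_n a differential operator of order ≤ n mapping S^n(U) into U and S^{<n}(U) to 0, Δ² = 0, Δ(1) = 0. Then the derived brackets l_n(a_1,…,a_n) := [[…[Δ_n, L_{a_1}],…], L_{a_n}](1), restricted to a_1,…,a_n ∈ U, take values in U and satisfy l_n(a_1,…,a_n) = Δ_n(a_1⋯a_n); consequently U[1] is closed under the brackets l_n and is an L∞-subalgebra of S(U)[1]. -/

import Mathlib

open scoped Classical

namespace BVPaper

variable {k : Type*} [Field k] [CharZero k]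
variable {A : Type*} [Ring A] [Algebra k A]

/-- Left multiplication operator `L_a(b) = a*b`. -/
noncomputable def L (a : A) : A →ₗ[k] A := LinearMap.mulLeft k a

/-- Graded commutator of operators of degrees `p` and `q`:
`[P,Q] = P∘Q - (-1)^{pq} Q∘P`. -/
noncomputable def gcomm (p q : ℤ) (P Q : A →ₗ[k] A) : A →ₗ[k] A :=
  P ∘ₗ Q - (((p * q).negOnePow : ℤˣ) : ℤ) • (Q ∘ₗ P)

/-- Graded commutativity of a grading `𝒜` on `A` (Koszul rule). -/
def GradedComm (𝒜 : ℤ → Submodule k A) : Prop :=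
  ∀ (i j : ℤ) (a b : A), a ∈ 𝒜 i → b ∈ 𝒜 j →
    a * b = (((i * j).negOnePow : ℤˣ) : ℤ) • (b * a)

/-- `D` is a homogeneous operator of degree `d`. -/
def IsHomog (𝒜 : ℤ → Submodule k A) (d : ℤ) (D : A →ₗ[k] A) : Prop :=
  ∀ (i : ℤ) (a : A), a ∈ 𝒜 i → D a ∈ 𝒜 (i + d)

/-- `D`, of degree `d`, is a differential operator of order `≤ n`:
all `(n+1)`-fold iterated graded commutators with left multiplications vanish. -/
def IsDiffOp (𝒜 : ℤ → Submodule k A) : ℕ → ℤ → (A →ₗ[k] A) → Prop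
  | 0, d, D => ∀ (i : ℤ) (a : A), a ∈ 𝒜 i → gcomm d i D (L a) = 0
  | n + 1, d, D => ∀ (i : ℤ) (a : A), a ∈ 𝒜 i → IsDiffOp 𝒜 n (d + i) (gcomm d i D (L a))

/-- Iterated graded commutator `[[…[Q, L_{a_1}],…], L_{a_m}]` where the list records
the degrees of the (homogeneous) elements `a_i`. -/
noncomputable def iterOp (Q : A →ₗ[k] A) (q : ℤ) : List (ℤ × A) → (A →ₗ[k] A)
  | [] => Q
  | (i, a) :: t => iterOp (gcomm q i Q (L a)) (q + i) t

/-- The Koszul sign of a permutation `σ` acting on elements of degrees `d i`. -/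
def koszulSign {n : ℕ} (d : Fin n → ℤ) (σ : Equiv.Perm (Fin n)) : ℤˣ :=
  ∏ p ∈ Finset.univ.filter (fun p : Fin n × Fin n => p.1 < p.2 ∧ σ p.2 < σ p.1),
    (d p.1 * d p.2).negOnePow

/-- An `(n, m-n)`-shuffle. -/
def IsShuffle (m n : ℕ) (σ : Equiv.Perm (Fin m)) : Prop :=
  (∀ i j : Fin m, i < j → (j : ℕ) < n → σ i < σ j) ∧
  (∀ i j : Fin m, i < j → n ≤ (i : ℕ) → σ i < σ j)



lemma prodMem (𝒮 : ℕ → ℤ → Submodule k A) (hone : (1 : A) ∈ 𝒮 0 0)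
    (hmul : ∀ (p q : ℕ) (i j : ℤ) (a b : A), a ∈ 𝒮 p i → b ∈ 𝒮 q j →
      a * b ∈ 𝒮 (p + q) (i + j)) :
    ∀ l : List (ℤ × A), (∀ p ∈ l, p.2 ∈ 𝒮 1 p.1) →
      (l.map Prod.snd).prod ∈ 𝒮 l.length (l.map Prod.fst).sum := by
  intro l
  induction l with
  | nil => intro _; simpa using hone
  | cons h t ih =>
    intro hmem
    have ht : (t.map Prod.snd).prod ∈ 𝒮 t.length (t.map Prod.fst).sum :=
      ih (fun p hp => hmem p (List.mem_cons_of_mem _ hp))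
    have hh : h.2 ∈ 𝒮 1 h.1 := hmem h List.mem_cons_self
    have := hmul 1 t.length h.1 (t.map Prod.fst).sum h.2 (t.map Prod.snd).prod hh ht
    simpa [Nat.add_comm] using this

lemma iterEq (𝒮 : ℕ → ℤ → Submodule k A) (hone : (1 : A) ∈ 𝒮 0 0)
    (hmul : ∀ (p q : ℕ) (i j : ℤ) (a b : A), a ∈ 𝒮 p i → b ∈ 𝒮 q j →
      a * b ∈ 𝒮 (p + q) (i + j)) :
    ∀ (l : List (ℤ × A)) (Q : A →ₗ[k] A) (q : ℤ), l ≠ [] →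
      (∀ p ∈ l, p.2 ∈ 𝒮 1 p.1) →
      (∀ m : ℕ, m < l.length → ∀ (j : ℤ) (x : A), x ∈ 𝒮 m j → Q x = 0) →
      iterOp Q q l 1 = Q (l.map Prod.snd).prod := by
  intro l
  induction l with
  | nil => intro Q q hne; exact absurd rfl hne
  | cons h t ih =>
    intro Q q _ hmem hkill
    obtain ⟨i, a⟩ := h
    have ha : a ∈ 𝒮 1 i := hmem (i, a) List.mem_cons_self
    have hQ1 : Q 1 = 0 := hkill 0 (Nat.succ_pos _) 0 1 hone
    rcases eq_or_ne t [] with rfl | hne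
    · simp [iterOp, gcomm, L, hQ1]
    · have hkill' : ∀ m : ℕ, m < t.length → ∀ (j : ℤ) (x : A), x ∈ 𝒮 m j →
          (gcomm q i Q (L a)) x = 0 := by
        intro m hm j x hx
        have h1 : Q (a * x) = 0 := by
          refine hkill (1 + m) ?_ (i + j) (a * x) (hmul 1 m i j a x ha hx)
          simpa [List.length_cons, Nat.add_comm] using Nat.succ_lt_succ hm
        have h2 : Q x = 0 := hkill m (Nat.lt_succ_of_lt hm) j x hx
        simp [gcomm, L, h1, h2]
      have := ih (gcomm q i Q (L a)) (q + i) hne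
        (fun p hp => hmem p (List.mem_cons_of_mem _ hp)) hkill'
      rw [iterOp, this]
      have hQt : Q (t.map Prod.snd).prod = 0 :=
        hkill t.length (Nat.lt_succ_self _)
          (t.map Prod.fst).sum (t.map Prod.snd).prod
          (prodMem 𝒮 hone hmul t (fun p hp => hmem p (List.mem_cons_of_mem _ hp)))
      simp [gcomm, L, hQt]

theorem statement15 (𝒮 : ℕ → ℤ → Submodule k A)
    (hcomm : GradedComm (fun j => ⨆ m : ℕ, 𝒮 m j))
    (hone : (1 : A) ∈ 𝒮 0 0)
    (hmul : ∀ (p q : ℕ) (i j : ℤ) (a b : A), a ∈ 𝒮 p i → b ∈ 𝒮 q j →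
      a * b ∈ 𝒮 (p + q) (i + j))
    (Δop : ℕ → (A →ₗ[k] A)) (h0 : Δop 0 = 0)
    (hdiff : ∀ n : ℕ, 1 ≤ n →
      IsDiffOp (fun j => ⨆ m : ℕ, 𝒮 m j) n (3 - 2 * (n : ℤ)) (Δop n))
    (hpure1 : ∀ n : ℕ, 1 ≤ n → ∀ j : ℤ, ∀ x ∈ 𝒮 n j,
      Δop n x ∈ 𝒮 1 (j + (3 - 2 * (n : ℤ))))
    (hpure0 : ∀ (n m : ℕ), m < n → ∀ j : ℤ, ∀ x ∈ 𝒮 m j, Δop n x = 0)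
    (hsq : ∀ N : ℕ, ∑ i ∈ Finset.range (N + 1), (Δop i ∘ₗ Δop (N - i)) = 0)
    (n : ℕ) (hn : 1 ≤ n) (deg : Fin n → ℤ) (x : Fin n → A)
    (hx : ∀ i, x i ∈ 𝒮 1 (deg i)) :
    iterOp (Δop n) (3 - 2 * (n : ℤ)) (List.ofFn fun i => (deg i, x i)) 1
        = Δop n ((List.ofFn x).prod)
      ∧ Δop n ((List.ofFn x).prod) ∈ 𝒮 1 ((∑ i, deg i) + (3 - 2 * (n : ℤ))) := by
  set l : List (ℤ × A) := List.ofFn fun i => (deg i, x i) with hl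
  have hmem : ∀ p ∈ l, p.2 ∈ 𝒮 1 p.1 := by
    intro p hp
    rw [hl, List.mem_ofFn] at hp
    obtain ⟨i, rfl⟩ := hp
    exact hx i
  have hlen : l.length = n := by simp [hl]
  have hsnd : l.map Prod.snd = List.ofFn x := by
    simp [hl, List.map_ofFn]; rfl
  have hfst : (l.map Prod.fst).sum = ∑ i, deg i := by
    simp [hl, List.map_ofFn, List.sum_ofFn]
  have hne : l ≠ [] := by
    intro h; rw [h] at hlen; simp at hlen; omega
  have hkill : ∀ m : ℕ, m < l.length → ∀ (j : ℤ) (x : A), x ∈ 𝒮 m j → Δop n x = 0 := by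
    intro m hm j y hy
    exact hpure0 n m (hlen ▸ hm) j y hy
  have h1 := iterEq 𝒮 hone hmul l (Δop n) (3 - 2 * (n : ℤ)) hne hmem hkill
  rw [hsnd] at h1
  have hmem' : (List.ofFn x).prod ∈ 𝒮 n (∑ i, deg i) := by
    have := prodMem 𝒮 hone hmul l hmem
    rwa [hsnd, hlen, hfst] at this
  exact ⟨h1, hpure1 n hn _ _ hmem'⟩

end BVPaper
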